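/- Let k be a field of characteristic 0 and suppose f = x + Σᵢ f_{dᵢ}, g = y + Σᵢ g_{dᵢ} with f_{dᵢ}, g_{dᵢ} homogeneous of degree dᵢ ≥ 2 for distinct dᵢ satisfying the Sidon property, and J(f,g) ∈ k \ {0}. Then for each i there exist a linear form hᵢ = αᵢx + βᵢy and scalars aᵢ, bᵢ ∈ k such that f_{dᵢ} = aᵢ·hᵢ^{dᵢ} and g_{dᵢ} = bᵢ·hᵢ^{dᵢ}. -/

import Mathlib

open MvPolynomial

set_option linter.unusedSectionVars false
noncomputable section
namespace JacAux

variable {k : Type*} [Field k] [CharZero k]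

def phi : MvPolynomial (Fin 2) k →ₐ[k] Polynomial k := aeval ![Polynomial.X, 1]

lemma phi_monomial (m : Fin 2 →₀ ℕ) (c : k) :
    phi (monomial m c) = Polynomial.C c * Polynomial.X ^ (m 0) := by
  rw [phi, aeval_monomial, Finsupp.prod_fintype _ _ (fun i => pow_zero _), Fin.prod_univ_two]
  simp [Polynomial.algebraMap_eq]

lemma deg2 (m : Fin 2 →₀ ℕ) : m.degree = m 0 + m 1 := by
  rw [Finsupp.degree_apply, Finset.sum_subset (Finset.subset_univ m.support)
    (fun i _ hi => Finsupp.notMem_support_iff.mp hi)]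
  exact Fin.sum_univ_two _

def pr (j l : ℕ) : Fin 2 →₀ ℕ := Finsupp.single 0 j + Finsupp.single 1 l

lemma pr_apply0 (j l : ℕ) : pr j l 0 = j := by simp [pr, Finsupp.single_apply]

lemma pr_apply1 (j l : ℕ) : pr j l 1 = l := by simp [pr, Finsupp.single_apply]

lemma pr_degree (j l : ℕ) : (pr j l).degree = j + l := by
  rw [deg2, pr_apply0, pr_apply1]

lemma finsupp_eq_pair (m : Fin 2 →₀ ℕ) : m = pr (m 0) (m 1) := by
  ext i
  fin_cases i
  · simp [pr_apply0]
  · simp [pr_apply1]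

lemma coeff_phi {N : ℕ} {F : MvPolynomial (Fin 2) k} (hF : F.IsHomogeneous N)
    (j : ℕ) :
    (phi F).coeff j = F.coeff (pr j (N - j)) := by
  conv_lhs => rw [← support_sum_monomial_coeff F]
  rw [map_sum, Polynomial.finset_sum_coeff]
  have key : ∀ m ∈ F.support,
      (phi (monomial m (F.coeff m))).coeff j
        = if m = pr j (N - j) then F.coeff (pr j (N - j)) else 0 := by
    intro m hm
    rw [phi_monomial, Polynomial.coeff_C_mul, Polynomial.coeff_X_pow]
    have hdeg : m 0 + m 1 = N := by
      rw [← deg2]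
      by_contra hne
      exact (mem_support_iff.mp hm) (hF.coeff_eq_zero hne)
    by_cases h : j = m 0
    · have hm' : m = pr j (N - j) := by
        rw [finsupp_eq_pair m, h]
        congr 1
        omega
      rw [if_pos h, if_pos hm', hm', mul_one]
    · have : ¬ (m = pr j (N - j)) := by
        intro hh
        exact h (by rw [hh, pr_apply0])
      rw [if_neg h, if_neg this, mul_zero]
  rw [Finset.sum_congr rfl key, Finset.sum_ite_eq' F.support (pr j (N - j))]
  by_cases hmem : pr j (N - j) ∈ F.support
  · rw [if_pos hmem]
  · rw [if_neg hmem, MvPolynomial.notMem_support_iff.mp hmem]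


lemma phi_inj {N : ℕ} {F G : MvPolynomial (Fin 2) k}
    (hF : F.IsHomogeneous N) (hG : G.IsHomogeneous N) (h : phi F = phi G) : F = G := by
  ext m
  by_cases hm : m.degree = N
  · have hm0 : m 0 ≤ N := by rw [deg2] at hm; omega
    have h1 : m 1 = N - m 0 := by rw [deg2] at hm; omega
    rw [finsupp_eq_pair m, h1, ← coeff_phi hF, ← coeff_phi hG, h]
  · rw [hF.coeff_eq_zero hm, hG.coeff_eq_zero hm]

lemma phi_pderiv0 (F : MvPolynomial (Fin 2) k) :
    phi (pderiv 0 F) = Polynomial.derivative (phi F) := by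
  induction F using MvPolynomial.induction_on' with
  | monomial m c =>
    rw [pderiv_monomial, phi_monomial, phi_monomial, Polynomial.derivative_C_mul,
      Polynomial.derivative_X_pow]
    simp only [Finsupp.tsub_apply, Finsupp.single_eq_same]
    by_cases h : m 0 = 0
    · simp [h]
    · rw [Polynomial.C_mul]
      push_cast
      ring
  | add p q hp hq => simp [map_add, hp, hq]

lemma euler {N : ℕ} {F : MvPolynomial (Fin 2) k} (hF : F.IsHomogeneous N) :
    X 0 * pderiv 0 F + X 1 * pderiv 1 F = (N : MvPolynomial (Fin 2) k) * F := by
  conv_lhs => rw [← support_sum_monomial_coeff F]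
  rw [map_sum, map_sum, Finset.mul_sum, Finset.mul_sum, ← Finset.sum_add_distrib]
  conv_rhs => rw [← support_sum_monomial_coeff F, Finset.mul_sum]
  refine Finset.sum_congr rfl fun m hm => ?_
  have hdeg : m 0 + m 1 = N := by
    rw [← deg2]
    by_contra hne
    exact (mem_support_iff.mp hm) (hF.coeff_eq_zero hne)
  have step : ∀ i : Fin 2, X i * pderiv i (monomial m (coeff m F))
      = (m i : MvPolynomial (Fin 2) k) * monomial m (coeff m F) := by
    intro i
    rw [pderiv_monomial]
    by_cases h : m i = 0
    · simp [h]
    · rw [X, monomial_mul, one_mul]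
      have hmm : Finsupp.single i 1 + (m - Finsupp.single i 1) = m := by
        ext l
        rw [Finsupp.add_apply, Finsupp.tsub_apply, Finsupp.single_apply]
        by_cases hl : i = l
        · subst hl; simp only [eq_self_iff_true, if_true]; omega
        · simp only [if_neg hl]; omega
      rw [hmm]
      rw [show ((m i : MvPolynomial (Fin 2) k)) = C ((m i : k)) by
        rw [MvPolynomial.C_eq_coe_nat]]
      rw [C_mul_monomial, mul_comm]
  rw [step 0, step 1, show ((N : MvPolynomial (Fin 2) k)) = C ((N : k)) by
        rw [MvPolynomial.C_eq_coe_nat],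
     show ((m 0 : MvPolynomial (Fin 2) k)) = C ((m 0 : k)) by rw [MvPolynomial.C_eq_coe_nat],
     show ((m 1 : MvPolynomial (Fin 2) k)) = C ((m 1 : k)) by rw [MvPolynomial.C_eq_coe_nat],
     ← add_mul, ← C_add, ← Nat.cast_add, hdeg]

lemma phi_X0 : phi (X 0 : MvPolynomial (Fin 2) k) = Polynomial.X := by
  rw [phi, aeval_X]; rfl

lemma phi_X1 : phi (X 1 : MvPolynomial (Fin 2) k) = 1 := by
  rw [phi, aeval_X]; rfl

lemma phi_pderiv1 {N : ℕ} {F : MvPolynomial (Fin 2) k} (hF : F.IsHomogeneous N) :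
    phi (pderiv 1 F) = Polynomial.C (N : k) * phi F
      - Polynomial.X * Polynomial.derivative (phi F) := by
  have e := congrArg phi (euler hF)
  rw [map_add, map_mul, map_mul, phi_X0, phi_X1, one_mul, phi_pderiv0, map_mul] at e
  have : phi ((N : MvPolynomial (Fin 2) k)) = Polynomial.C ((N:k)) := by
    rw [show ((N : MvPolynomial (Fin 2) k)) = C ((N : k)) by rw [MvPolynomial.C_eq_coe_nat]]
    rw [phi, aeval_C]
    rfl
  rw [this] at e
  linear_combination e


lemma wronskian_prop {P Q : Polynomial k} (hP : P ≠ 0) (hQ : Q ≠ 0)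
    (h : Polynomial.derivative P * Q = P * Polynomial.derivative Q) :
    ∃ l : k, l ≠ 0 ∧ Q = Polynomial.C l * P := by
  classical
  letI : GCDMonoid (Polynomial k) := EuclideanDomain.gcdMonoid _
  set g := GCDMonoid.gcd P Q with hg
  have hg0 : g ≠ 0 := gcd_ne_zero_of_left hP
  have hdvdP : g ∣ P := gcd_dvd_left P Q
  have hdvdQ : g ∣ Q := gcd_dvd_right P Q
  set P1 := P / g with hP1
  set Q1 := Q / g with hQ1
  have hPg : g * P1 = P := EuclideanDomain.mul_div_cancel' hg0 hdvdP
  have hQg : g * Q1 = Q := EuclideanDomain.mul_div_cancel' hg0 hdvdQ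
  have hcop : IsCoprime P1 Q1 := isCoprime_div_gcd_div_gcd hQ
  have hw : Polynomial.wronskian P1 Q1 = 0 := by
    have hgg : g * g ≠ 0 := mul_ne_zero hg0 hg0
    apply mul_left_cancel₀ hgg
    rw [mul_zero]
    have : g * g * Polynomial.wronskian P1 Q1 = Polynomial.wronskian P Q := by
      rw [Polynomial.wronskian, Polynomial.wronskian, ← hPg, ← hQg]
      rw [Polynomial.derivative_mul, Polynomial.derivative_mul]
      ring
    rw [this, Polynomial.wronskian, h, sub_self]
  obtain ⟨hd1, hd2⟩ := hcop.wronskian_eq_zero_iff.mp hw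
  have hP1C : P1 = Polynomial.C (P1.coeff 0) :=
    Polynomial.eq_C_of_natDegree_eq_zero (Polynomial.natDegree_eq_zero_of_derivative_eq_zero hd1)
  have hQ1C : Q1 = Polynomial.C (Q1.coeff 0) :=
    Polynomial.eq_C_of_natDegree_eq_zero (Polynomial.natDegree_eq_zero_of_derivative_eq_zero hd2)
  have hP10 : P1.coeff 0 ≠ 0 := by
    intro hc
    rw [hc, map_zero] at hP1C
    rw [← hPg, hP1C, mul_zero] at hP
    exact hP rfl
  have hQ10 : Q1.coeff 0 ≠ 0 := by
    intro hc
    rw [hc, map_zero] at hQ1C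
    rw [← hQg, hQ1C, mul_zero] at hQ
    exact hQ rfl
  refine ⟨Q1.coeff 0 / P1.coeff 0, div_ne_zero hQ10 hP10, ?_⟩
  have hPe : P = g * Polynomial.C (P1.coeff 0) := by rw [← hP1C, hPg]
  have hQe : Q = g * Polynomial.C (Q1.coeff 0) := by rw [← hQ1C, hQg]
  rw [hPe, hQe]
  rw [show Polynomial.C (Q1.coeff 0 / P1.coeff 0) * (g * Polynomial.C (P1.coeff 0))
      = g * Polynomial.C (Q1.coeff 0 / P1.coeff 0 * P1.coeff 0) by rw [map_mul]; ring]
  rw [div_mul_cancel₀ _ hP10]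

lemma binom_coeff (a : k) (dd j : ℕ) :
    ((Polynomial.C a * Polynomial.X + 1 : Polynomial k) ^ dd).coeff j
      = (dd.choose j : k) * a ^ j := by
  rw [add_pow]
  rw [Polynomial.finset_sum_coeff]
  have key : ∀ m ∈ Finset.range (dd + 1),
      ((Polynomial.C a * Polynomial.X) ^ m * 1 ^ (dd - m) * (dd.choose m : Polynomial k)).coeff j
        = if m = j then (dd.choose j : k) * a ^ j else 0 := by
    intro m _
    rw [one_pow, mul_one, mul_pow, ← Polynomial.C_pow]
    rw [show ((dd.choose m : Polynomial k)) = Polynomial.C ((dd.choose m : k)) by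
      rw [map_natCast]]
    rw [mul_comm _ (Polynomial.C _), ← mul_assoc, ← map_mul, Polynomial.coeff_C_mul,
      Polynomial.coeff_X_pow]
    by_cases h : m = j
    · rw [if_pos h, if_pos h.symm, h, mul_one, mul_comm]
    · rw [if_neg h, if_neg (fun hh => h hh.symm), mul_zero]
  rw [Finset.sum_congr rfl key, Finset.sum_ite_eq' (Finset.range (dd+1)) j]
  by_cases hj : j ∈ Finset.range (dd + 1)
  · rw [if_pos hj]
  · rw [if_neg hj]
    have : dd.choose j = 0 := Nat.choose_eq_zero_of_lt (by simpa using hj)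
    rw [this]
    simp

lemma choose_identity (dd j : ℕ) :
    ((j : k) + 1) * (dd.choose (j+1) : k) = (dd.choose j : k) * ((dd : k) - (j : k)) := by
  rcases lt_or_ge j dd with hj | hj
  · have := Nat.choose_succ_right_eq dd j
    have hcast : ((dd.choose (j+1) * (j+1) : ℕ) : k) = ((dd.choose j * (dd - j) : ℕ) : k) := by
      rw [this]
    push_cast [Nat.cast_sub hj.le] at hcast
    linear_combination hcast
  · rcases eq_or_lt_of_le hj with he | hl
    · subst he
      rw [Nat.choose_eq_zero_of_lt (by omega)]
      simp
    · rw [Nat.choose_eq_zero_of_lt (by omega), Nat.choose_eq_zero_of_lt hl]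
      simp

lemma rec_solve {dd : ℕ} {P : Polynomial k} {lam : k}
    (hrec : ∀ j : ℕ, ((j : k) + 1) * P.coeff (j+1) = lam * ((j : k) - (dd : k)) * P.coeff j) :
    ∀ j, P.coeff j = P.coeff 0 * (dd.choose j : k) * (-lam) ^ j := by
  intro j
  induction j with
  | zero => simp
  | succ j ih =>
    have hj1 : ((j : k) + 1) ≠ 0 := by
      have := Nat.cast_add_one_ne_zero (R := k) j
      simpa using this
    apply mul_left_cancel₀ hj1
    rw [hrec j, ih]
    rw [show ((j:k)+1) * (P.coeff 0 * (dd.choose (j+1) : k) * (-lam)^(j+1))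
        = P.coeff 0 * (((j:k)+1) * (dd.choose (j+1) : k)) * (-lam)^(j+1) by ring,
      choose_identity]
    ring


lemma phi_C (a : k) : phi (C a : MvPolynomial (Fin 2) k) = Polynomial.C a := by
  rw [phi, aeval_C, Polynomial.algebraMap_eq]

lemma phi_form (a al be : k) (dd : ℕ) :
    phi (C a * (C al * X 0 + C be * X 1) ^ dd : MvPolynomial (Fin 2) k)
      = Polynomial.C a * (Polynomial.C al * Polynomial.X + Polynomial.C be) ^ dd := by
  rw [map_mul, map_pow, map_add, map_mul, map_mul, phi_X0, phi_X1, phi_C, phi_C, phi_C, mul_one]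

lemma rhs_homog (a al be : k) (dd : ℕ) :
    (C a * (C al * X 0 + C be * X 1) ^ dd : MvPolynomial (Fin 2) k).IsHomogeneous dd := by
  have h1 : (C al * X 0 + C be * X 1 : MvPolynomial (Fin 2) k).IsHomogeneous 1 :=
    (isHomogeneous_C_mul_X al 0).add (isHomogeneous_C_mul_X be 1)
  have h2 := h1.pow dd
  rw [one_mul] at h2
  exact h2.C_mul a

lemma pderiv_homog {F : MvPolynomial (Fin 2) k} {N : ℕ} (hF : F.IsHomogeneous N) (i : Fin 2) :
    (pderiv i F).IsHomogeneous (N - 1) := by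
  conv_lhs => rw [← support_sum_monomial_coeff F]
  rw [map_sum]
  apply IsHomogeneous.sum
  intro m hm
  have hdeg : m 0 + m 1 = N := by
    rw [← deg2]
    by_contra hne
    exact (mem_support_iff.mp hm) (hF.coeff_eq_zero hne)
  rw [pderiv_monomial]
  by_cases h : m i = 0
  · rw [h]
    norm_num
    apply isHomogeneous_zero
  · apply isHomogeneous_monomial
    have hi01 : i = 0 ∨ i = 1 := by omega
    rcases hi01 with hi | hi <;> subst hi <;>
      · rw [deg2, Finsupp.tsub_apply, Finsupp.tsub_apply, Finsupp.single_apply,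
          Finsupp.single_apply]
        simp only [Fin.isValue, if_true, if_pos rfl]
        norm_num
        omega

lemma key {dd : ℕ} (hdd : 2 ≤ dd) (F G : MvPolynomial (Fin 2) k)
    (hF : F.IsHomogeneous dd) (hG : G.IsHomogeneous dd)
    (h1 : pderiv 0 F + pderiv 1 G = 0)
    (h2 : pderiv 0 F * pderiv 1 G - pderiv 1 F * pderiv 0 G = 0) :
    ∃ al be a b : k, F = C a * (C al * X 0 + C be * X 1) ^ dd
      ∧ G = C b * (C al * X 0 + C be * X 1) ^ dd := by
  set P := phi F with hPdef
  set Q := phi G with hQdef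
  have hdd0 : ((dd : k)) ≠ 0 := Nat.cast_ne_zero.mpr (by omega)
  have hϕ1 : Polynomial.derivative P
      + (Polynomial.C (dd : k) * Q - Polynomial.X * Polynomial.derivative Q) = 0 := by
    have := congrArg phi h1
    rwa [map_add, map_zero, phi_pderiv0, phi_pderiv1 hG] at this
  by_cases hP0 : P = 0
  · -- F = 0, G = b x^dd
    have hFeq : F = 0 := phi_inj hF (isHomogeneous_zero _ _ _) (by rw [map_zero]; exact hP0)
    have hG1 : pderiv 1 G = 0 := by rwa [hFeq, map_zero, zero_add] at h1
    have hQrel : Polynomial.C (dd : k) * Q = Polynomial.X * Polynomial.derivative Q := by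
      have := congrArg phi hG1
      rw [phi_pderiv1 hG, map_zero, sub_eq_zero] at this
      exact this
    have hco : ∀ j, j ≠ dd → Q.coeff j = 0 := by
      intro j hj
      have hcc := congrArg (fun p => Polynomial.coeff p j) hQrel
      simp only [Polynomial.coeff_C_mul] at hcc
      cases j with
      | zero =>
        rw [Polynomial.coeff_X_mul_zero] at hcc
        exact (mul_eq_zero.mp hcc).resolve_left hdd0
      | succ i =>
        rw [Polynomial.coeff_X_mul, Polynomial.coeff_derivative] at hcc
        have hne : (dd : k) - ((i : k) + 1) ≠ 0 := by
          intro hz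
          apply hj
          have h4 : ((i + 1 : ℕ) : k) = ((dd : ℕ) : k) := by push_cast; linear_combination -hz
          exact Nat.cast_injective h4
        have : ((dd : k) - ((i : k) + 1)) * Q.coeff (i + 1) = 0 := by linear_combination hcc
        exact (mul_eq_zero.mp this).resolve_left hne
    refine ⟨1, 0, 0, Q.coeff dd, ?_, ?_⟩
    · rw [hFeq, map_zero, zero_mul]
    · apply phi_inj hG (rhs_homog _ _ _ _)
      rw [phi_form]
      rw [show (Polynomial.C (1:k) * Polynomial.X + Polynomial.C (0:k)) = Polynomial.X by simp]
      ext j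
      rw [Polynomial.coeff_C_mul, Polynomial.coeff_X_pow]
      by_cases hj : j = dd
      · rw [if_pos hj, hj, mul_one]
      · rw [if_neg hj, mul_zero, hco j hj]
  · by_cases hQ0 : Q = 0
    · -- G = 0, F = a y^dd
      have hGeq : G = 0 := phi_inj hG (isHomogeneous_zero _ _ _) (by rw [map_zero]; exact hQ0)
      have hF0 : pderiv 0 F = 0 := by rwa [hGeq, map_zero, add_zero] at h1
      have hPder : Polynomial.derivative P = 0 := by
        have := congrArg phi hF0
        rwa [phi_pderiv0, map_zero] at this
      have hPC : P = Polynomial.C (P.coeff 0) :=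
        Polynomial.eq_C_of_natDegree_eq_zero
          (Polynomial.natDegree_eq_zero_of_derivative_eq_zero hPder)
      refine ⟨0, 1, P.coeff 0, 0, ?_, ?_⟩
      · apply phi_inj hF (rhs_homog _ _ _ _)
        rw [phi_form]
        rw [show (Polynomial.C (0:k) * Polynomial.X + Polynomial.C (1:k))
            = (1 : Polynomial k) by simp]
        rw [one_pow, mul_one, ← hPC]
      · rw [hGeq, map_zero, zero_mul]
    · -- main case
      have hW : Polynomial.derivative P * Q = P * Polynomial.derivative Q := by
        have hh := congrArg phi h2
        rw [map_sub, map_mul, map_mul, map_zero, phi_pderiv0, phi_pderiv0,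
          phi_pderiv1 hF, phi_pderiv1 hG] at hh
        have h3 : Polynomial.C (dd : k)
            * (Polynomial.derivative P * Q - P * Polynomial.derivative Q) = 0 := by
          linear_combination hh
        rcases mul_eq_zero.mp h3 with hc | hc
        · exact absurd (by exact_mod_cast Polynomial.C_eq_zero.mp hc) hdd0
        · exact sub_eq_zero.mp hc
      obtain ⟨l, hl0, hQP⟩ := wronskian_prop hP0 hQ0 hW
      have hrec : ∀ j : ℕ, ((j : k) + 1) * P.coeff (j + 1)
          = l * ((j : k) - (dd : k)) * P.coeff j := by
        intro j
        have hc := congrArg (fun p => Polynomial.coeff p j) hϕ1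
        rw [hQP] at hc
        simp only [Polynomial.derivative_C_mul, Polynomial.coeff_add, Polynomial.coeff_sub,
          Polynomial.coeff_C_mul, Polynomial.coeff_zero, Polynomial.coeff_derivative] at hc
        cases j with
        | zero =>
          rw [Polynomial.coeff_X_mul_zero] at hc
          push_cast
          linear_combination hc
        | succ i =>
          rw [Polynomial.coeff_X_mul, Polynomial.coeff_C_mul,
            Polynomial.coeff_derivative] at hc
          push_cast at hc ⊢
          linear_combination hc
      have pform := rec_solve hrec
      set p0 := P.coeff 0 with hp0def
      have hPe : P = Polynomial.C p0
          * (Polynomial.C (-l) * Polynomial.X + Polynomial.C 1) ^ dd := by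
        ext j
        rw [Polynomial.coeff_C_mul, Polynomial.C_1, binom_coeff, pform j]
        ring
      refine ⟨-l, 1, p0, l * p0, ?_, ?_⟩
      · apply phi_inj hF (rhs_homog _ _ _ _)
        rw [phi_form, ← hPdef]
        exact hPe
      · apply phi_inj hG (rhs_homog _ _ _ _)
        rw [phi_form, ← hQdef, hQP, hPe, map_mul, mul_assoc]


lemma hc_homog {p : MvPolynomial (Fin 2) k} {N : ℕ} (hp : p.IsHomogeneous N) (e : ℕ) :
    homogeneousComponent e p = if e = N then p else 0 :=
  homogeneousComponent_of_mem ((mem_homogeneousSubmodule _ _).2 hp)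

end JacAux
end

open JacAux in
theorem components_are_powers_of_linear_forms {k : Type*} [Field k] [CharZero k]
    (n : ℕ) (d : Fin n → ℕ) (hd : ∀ i, 2 ≤ d i)
    (hinj : Function.Injective d)
    (hSidon : ∀ a ∈ insert 1 (Finset.image d Finset.univ),
      ∀ b ∈ insert 1 (Finset.image d Finset.univ),
      ∀ p ∈ insert 1 (Finset.image d Finset.univ),
      ∀ q ∈ insert 1 (Finset.image d Finset.univ),
        a + b = p + q → (a = p ∧ b = q) ∨ (a = q ∧ b = p))
    (fc gc : Fin n → MvPolynomial (Fin 2) k)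
    (hf : ∀ i, (fc i).IsHomogeneous (d i))
    (hg : ∀ i, (gc i).IsHomogeneous (d i))
    (f g : MvPolynomial (Fin 2) k)
    (hfs : f = X 0 + ∑ i, fc i) (hgs : g = X 1 + ∑ i, gc i)
    (hJ : ∃ c : k, c ≠ 0 ∧
      pderiv 0 f * pderiv 1 g - pderiv 1 f * pderiv 0 g = C c) :
    ∀ i, ∃ α β a b : k,
      fc i = C a * (C α * X 0 + C β * X 1) ^ (d i)
      ∧ gc i = C b * (C α * X 0 + C β * X 1) ^ (d i) := by
  classical
  intro i0
  obtain ⟨c, hc0, hJeq⟩ := hJ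
  subst hfs
  subst hgs
  set AA : Fin n → MvPolynomial (Fin 2) k := fun i => pderiv 0 (fc i) with hAA
  set BB : Fin n → MvPolynomial (Fin 2) k := fun i => pderiv 1 (gc i) with hBB
  set CC : Fin n → MvPolynomial (Fin 2) k := fun i => pderiv 1 (fc i) with hCC
  set DD : Fin n → MvPolynomial (Fin 2) k := fun i => pderiv 0 (gc i) with hDD
  have hmem : ∀ i : Fin n, d i ∈ insert 1 (Finset.image d Finset.univ) := fun i =>
    Finset.mem_insert_of_mem (Finset.mem_image_of_mem d (Finset.mem_univ i))
  have hmem1 : (1 : ℕ) ∈ insert 1 (Finset.image d Finset.univ) := Finset.mem_insert_self _ _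
  have hhA : ∀ i, (AA i).IsHomogeneous (d i - 1) := fun i => pderiv_homog (hf i) 0
  have hhB : ∀ i, (BB i).IsHomogeneous (d i - 1) := fun i => pderiv_homog (hg i) 1
  have hhC : ∀ i, (CC i).IsHomogeneous (d i - 1) := fun i => pderiv_homog (hf i) 1
  have hhD : ∀ i, (DD i).IsHomogeneous (d i - 1) := fun i => pderiv_homog (hg i) 0
  have hdf0 : pderiv 0 (X 0 + ∑ i, fc i) = 1 + ∑ i, AA i := by
    rw [map_add, map_sum, pderiv_X_self]
  have hdf1 : pderiv 1 (X (0 : Fin 2) + ∑ i, fc i) = ∑ i, CC i := by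
    rw [map_add, map_sum, pderiv_X_of_ne (by decide), zero_add]
  have hdg1 : pderiv 1 (X (1 : Fin 2) + ∑ i, gc i) = 1 + ∑ i, BB i := by
    rw [map_add, map_sum, pderiv_X_self]
  have hdg0 : pderiv 0 (X (1 : Fin 2) + ∑ i, gc i) = ∑ i, DD i := by
    rw [map_add, map_sum, pderiv_X_of_ne (by decide), zero_add]
  rw [hdf0, hdf1, hdg1, hdg0] at hJeq
  have e1 : ∑ i, ∑ j, (AA i * BB j - CC i * DD j)
      = (∑ i, AA i) * (∑ j, BB j) - (∑ i, CC i) * (∑ j, DD j) := by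
    rw [Finset.sum_mul_sum, Finset.sum_mul_sum, ← Finset.sum_sub_distrib]
    exact Finset.sum_congr rfl fun i _ => by rw [← Finset.sum_sub_distrib]
  have hJ2 : (1 : MvPolynomial (Fin 2) k) + (∑ i, (AA i + BB i))
      + ∑ i, ∑ j, (AA i * BB j - CC i * DD j) = C c := by
    rw [e1, Finset.sum_add_distrib, ← hJeq]
    ring
  -- component at degree d i0 - 1
  have comp1 : AA i0 + BB i0 = 0 := by
    have h := congrArg (homogeneousComponent (d i0 - 1)) hJ2
    rw [map_add, map_add, map_sum, map_sum] at h
    rw [hc_homog (isHomogeneous_one _ _), if_neg (by have := hd i0; omega)] at h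
    rw [hc_homog (isHomogeneous_C _ _), if_neg (by have := hd i0; omega)] at h
    rw [Finset.sum_congr rfl (fun i _ => hc_homog ((hhA i).add (hhB i)) _)] at h
    rw [Finset.sum_congr rfl (fun i (_ : i ∈ Finset.univ) => map_sum _ _ _)] at h
    rw [Finset.sum_congr rfl (fun i (_ : i ∈ Finset.univ) =>
      Finset.sum_congr rfl (fun j _ => hc_homog (((hhA i).mul (hhB j)).sub
        ((hhC i).mul (hhD j))) _))] at h
    rw [Finset.sum_eq_single i0 (fun i _ hne => by
        rw [if_neg]
        intro hcond
        exact hne (hinj (by have := hd i; have := hd i0; omega))) (by simp), if_pos rfl] at h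
    rw [Finset.sum_eq_zero (fun i _ => Finset.sum_eq_zero (fun j _ => by
        rw [if_neg]
        intro hcond
        have hij : d i + d j = d i0 + 1 := by have := hd i; have := hd j; have := hd i0; omega
        rcases hSidon (d i) (hmem i) (d j) (hmem j) (d i0) (hmem i0) 1 hmem1 hij with
          ⟨_, hq⟩ | ⟨hp, _⟩
        · have := hd j; omega
        · have := hd i; omega))] at h
    rw [zero_add, add_zero] at h
    exact h
  -- component at degree 2 * d i0 - 2
  have comp2 : AA i0 * BB i0 - CC i0 * DD i0 = 0 := by
    have h := congrArg (homogeneousComponent (2 * d i0 - 2)) hJ2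
    rw [map_add, map_add, map_sum, map_sum] at h
    rw [hc_homog (isHomogeneous_one _ _), if_neg (by have := hd i0; omega)] at h
    rw [hc_homog (isHomogeneous_C _ _), if_neg (by have := hd i0; omega)] at h
    rw [Finset.sum_congr rfl (fun i _ => hc_homog ((hhA i).add (hhB i)) _)] at h
    rw [Finset.sum_congr rfl (fun i (_ : i ∈ Finset.univ) => map_sum _ _ _)] at h
    rw [Finset.sum_congr rfl (fun i (_ : i ∈ Finset.univ) =>
      Finset.sum_congr rfl (fun j _ => hc_homog (((hhA i).mul (hhB j)).sub
        ((hhC i).mul (hhD j))) _))] at h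
    rw [Finset.sum_eq_zero (fun i _ => by
        rw [if_neg]
        intro hcond
        have hij : d i + 1 = d i0 + d i0 := by have := hd i; have := hd i0; omega
        rcases hSidon (d i) (hmem i) 1 hmem1 (d i0) (hmem i0) (d i0) (hmem i0) hij with
          ⟨_, hq⟩ | ⟨_, hq⟩
        · have := hd i0; omega
        · have := hd i0; omega)] at h
    rw [Finset.sum_eq_single i0 (fun i _ hne => by
        apply Finset.sum_eq_zero
        intro j _
        rw [if_neg]
        intro hcond
        have hij : d i + d j = d i0 + d i0 := by
          have := hd i; have := hd j; have := hd i0; omega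
        rcases hSidon (d i) (hmem i) (d j) (hmem j) (d i0) (hmem i0) (d i0) (hmem i0) hij with
          ⟨hp, _⟩ | ⟨hp, _⟩
        · exact hne (hinj hp)
        · exact hne (hinj hp)) (by simp)] at h
    rw [Finset.sum_eq_single i0 (fun j _ hne => by
        rw [if_neg]
        intro hcond
        have hij : d i0 + d j = d i0 + d i0 := by
          have := hd j; have := hd i0; omega
        rcases hSidon (d i0) (hmem i0) (d j) (hmem j) (d i0) (hmem i0) (d i0) (hmem i0) hij with
          ⟨_, hq⟩ | ⟨_, hq⟩
        · exact hne (hinj hq)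
        · exact hne (hinj hq)) (by simp), if_pos (by have := hd i0; omega)] at h
    rw [zero_add, zero_add] at h
    exact h
  exact key (hd i0) (fc i0) (gc i0) (hf i0) (hg i0) comp1 comp2
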